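/- Let Γ⃗ be an orientation of a simply laced Dynkin diagram Γ with vertex set Γ₀, and let V be the free abelian group with basis {v_i : i ∈ Γ₀}. For i ∈ Γ₀ let θ_i be the group endomorphism of V determined by θ_i(v_j) = v_j for j ≠ i and θ_i(v_i) = Σ_{k : k → i in Γ⃗} v_k. Then the assignment ε_i ↦ θ_i extends uniquely to a monoid homomorphism from KH(Γ⃗) to the monoid End_ℤ(V) of group endomorphisms of V under composition. -/

import Mathlib

open FreeMonoid SimpleGraph

/-- The defining relations of a Hecke-Kiselman monoid associated with the
mixed graph encoded by the binary relation `Θ`. -/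
inductive HKRel {ι : Type*} (Θ : ι → ι → Prop) : FreeMonoid ι → FreeMonoid ι → Prop
  | idem (i : ι) : HKRel Θ (of i * of i) (of i)
  | comm (i j : ι) (h₁ : ¬ Θ i j) (h₂ : ¬ Θ j i) :
      HKRel Θ (of i * of j) (of j * of i)
  | braid (i j : ι) (h₁ : Θ i j) (h₂ : Θ j i) :
      HKRel Θ (of i * of j * of i) (of j * of i * of j)
  | kisel (i j : ι) (h₁ : Θ i j) (h₂ : ¬ Θ j i) :
      HKRel Θ (of i * of j * of i) (of i * of j)
  | kisel' (i j : ι) (h₁ : Θ i j) (h₂ : ¬ Θ j i) :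
      HKRel Θ (of j * of i * of j) (of i * of j)

/-- The Hecke-Kiselman monoid of the mixed graph encoded by `Θ`. -/
abbrev HK {ι : Type*} (Θ : ι → ι → Prop) : Type _ := (conGen (HKRel Θ)).Quotient

/-- The canonical idempotent generators of a Hecke-Kiselman monoid. -/
def HK.gen {ι : Type*} (Θ : ι → ι → Prop) (i : ι) : HK Θ :=
  (conGen (HKRel Θ)).mk' (FreeMonoid.of i)

/-- Dynkin diagram of type `D n` (meaningful for `4 ≤ n`). -/
def typeD (n : ℕ) : SimpleGraph (Fin n) :=
  SimpleGraph.fromRel (fun i j =>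
    ((i : ℕ) + 1 = (j : ℕ) ∧ 1 ≤ (i : ℕ)) ∨ ((i : ℕ) = 0 ∧ (j : ℕ) = 2))

/-- Dynkin diagram of type `E n` (meaningful for `n = 6, 7, 8`). -/
def typeE (n : ℕ) : SimpleGraph (Fin n) :=
  SimpleGraph.fromRel (fun i j =>
    ((i : ℕ) + 1 = (j : ℕ) ∧ 1 ≤ (i : ℕ)) ∨ ((i : ℕ) = 0 ∧ (j : ℕ) = 3))

/-- A graph is of type `A`, `D` or `E` if it is isomorphic to one of the
simply laced Dynkin diagrams `A n` (`n ≥ 1`), `D n` (`n ≥ 4`), `E6`, `E7`, `E8`. -/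
def IsADE {V : Type*} (G : SimpleGraph V) : Prop :=
  (∃ n, 1 ≤ n ∧ Nonempty (G ≃g pathGraph n)) ∨
  (∃ n, 4 ≤ n ∧ Nonempty (G ≃g typeD n)) ∨
  (∃ n, (n = 6 ∨ n = 7 ∨ n = 8) ∧ Nonempty (G ≃g typeE n))

/-- A simply laced Dynkin diagram: a simple graph each of whose connected
components is of type `A`, `D` or `E`. -/
def IsSimplyLacedDynkin {V : Type*} (G : SimpleGraph V) : Prop :=
  ∀ c : G.ConnectedComponent, IsADE (G.induce c.supp)

/-- `Θ` is an orientation of the simple graph `G`: every edge of `G` is given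
exactly one direction. -/
def IsOrientation {V : Type*} (G : SimpleGraph V) (Θ : V → V → Prop) : Prop :=
  (∀ i j, G.Adj i j ↔ (Θ i j ∨ Θ j i)) ∧ (∀ i j, Θ i j → ¬ Θ j i)
open scoped Classical in
/-- Let `Θ` be an orientation of a simply laced Dynkin diagram and
let `V = ⨁_{i ∈ Γ₀} ℤ vᵢ` be the free abelian group on the vertex set (here
`Γ₀ →₀ ℤ`, with `vᵢ = single i 1`). If `θ i` is the group endomorphism of `V` with
`θ i (v j) = v j` for `j ≠ i` and `θ i (v i) = ∑_{k → i} v k`, then `ε i ↦ θ i`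
extends uniquely to a monoid homomorphism from the Kiselman quotient of the 0-Hecke
monoid to `End_ℤ(V)` under composition. -/
theorem kiselmanQuotient_linear_representation {V : Type*} [Fintype V]
    (G : SimpleGraph V) (hG : IsSimplyLacedDynkin G)
    (Θ : V → V → Prop) (hΘ : IsOrientation G Θ)
    (θ : V → AddMonoid.End (V →₀ ℤ))
    (hθ₁ : ∀ i j : V, j ≠ i → θ i (Finsupp.single j 1) = Finsupp.single j 1)
    (hθ₂ : ∀ i : V,
      θ i (Finsupp.single i 1) = ∑ k : V, if Θ k i then Finsupp.single k 1 else 0) :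
    ∃! Φ : HK Θ →* AddMonoid.End (V →₀ ℤ), ∀ i, Φ (HK.gen Θ i) = θ i := by

  classical
  -- basic facts
  have hne : ∀ {i j : V}, Θ i j → i ≠ j := by
    intro i j h
    exact ((hΘ.1 i j).mpr (Or.inl h)).ne
  -- θ t fixes the sum S i when ¬ Θ t i
  have hSfix : ∀ t i : V, ¬ Θ t i →
      θ t (∑ k : V, if Θ k i then Finsupp.single k 1 else 0) =
        ∑ k : V, if Θ k i then Finsupp.single k 1 else 0 := by
    intro t i ht
    rw [map_sum]
    refine Finset.sum_congr rfl fun k _ => ?_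
    split_ifs with h
    · exact hθ₁ t k (fun e => ht (e ▸ h))
    · exact map_zero _
  -- extensionality for endomorphisms via values on basis vectors
  have extE : ∀ f g : AddMonoid.End (V →₀ ℤ),
      (∀ j : V, f (Finsupp.single j 1) = g (Finsupp.single j 1)) → f = g := by
    intro f g h
    refine Finsupp.addHom_ext fun a n => ?_
    have hs : (Finsupp.single a n : V →₀ ℤ) = n • Finsupp.single a 1 := by
      simp [Finsupp.smul_single]
    rw [hs]
    erw [map_zsmul (f : (V →₀ ℤ) →+ V →₀ ℤ), map_zsmul (g : (V →₀ ℤ) →+ V →₀ ℤ)]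
    rw [h]
  have mulE : ∀ (f g : AddMonoid.End (V →₀ ℤ)) (x : V →₀ ℤ), (f * g) x = f (g x) :=
    fun _ _ _ => rfl
  set φ : FreeMonoid V →* AddMonoid.End (V →₀ ℤ) := FreeMonoid.lift θ with hφ
  have hle : conGen (HKRel Θ) ≤ Con.ker φ := by
    refine Con.conGen_le.mpr ?_
    intro x y hxy
    induction hxy with
    | idem i =>
        show φ _ = φ _
        refine extE _ _ fun m => ?_
        simp only [hφ, map_mul, FreeMonoid.lift_eval_of, mulE]
        by_cases hm : m = i
        · subst hm
          rw [hθ₂ m, hSfix m m (fun h => hne h rfl)]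
        · rw [hθ₁ i m hm, hθ₁ i m hm]
    | comm i j h₁ h₂ =>
        show φ _ = φ _
        refine extE _ _ fun m => ?_
        simp only [hφ, map_mul, FreeMonoid.lift_eval_of, mulE]
        by_cases hij : i = j
        · subst hij; rfl
        by_cases hmi : m = i
        · subst hmi
          rw [hθ₁ j m hij, hθ₂ m, hSfix j m h₂]
        by_cases hmj : m = j
        · subst hmj
          rw [hθ₁ i m (fun e => hij e.symm), hθ₂ m, hSfix i m h₁]
        · simp only [hθ₁ j m hmj, hθ₁ i m hmi]
    | braid i j h₁ h₂ => exact absurd h₂ (hΘ.2 i j h₁)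
    | kisel i j h₁ h₂ =>
        have hij : i ≠ j := hne h₁
        show φ _ = φ _
        refine extE _ _ fun m => ?_
        simp only [hφ, map_mul, FreeMonoid.lift_eval_of, mulE]
        by_cases hmi : m = i
        · subst hmi
          simp only [hθ₂ m, hSfix j m h₂, hθ₁ j m hij, hSfix m m (fun h => hne h rfl)]
        · rw [hθ₁ i m hmi]
    | kisel' i j h₁ h₂ =>
        have hij : i ≠ j := hne h₁
        show φ _ = φ _
        refine extE _ _ fun m => ?_
        simp only [hφ, map_mul, FreeMonoid.lift_eval_of, mulE]
        by_cases hmj : m = j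
        · subst hmj
          rw [hθ₂ m, map_sum, map_sum]
          refine Finset.sum_congr rfl fun k _ => ?_
          split_ifs with h
          · by_cases hk : k = i
            · subst hk
              rw [hθ₂ k, hSfix m k h₂]
            · rw [hθ₁ i k hk, hθ₁ m k (hne h)]
          · simp
        · rw [hθ₁ j m hmj]
          by_cases hmi : m = i
          · subst hmi
            rw [hθ₂ m, hSfix j m h₂]
          · rw [hθ₁ i m hmi, hθ₁ j m hmj]
  refine ⟨(conGen (HKRel Θ)).lift φ hle, fun i => ?_, fun Ψ hΨ => ?_⟩
  · show (conGen (HKRel Θ)).lift φ hle ((conGen (HKRel Θ)).mk' (FreeMonoid.of i)) = θ i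
    rw [Con.lift_mk']
    exact FreeMonoid.lift_eval_of θ i
  · have hcomp : Ψ.comp (conGen (HKRel Θ)).mk' = φ := by
      refine FreeMonoid.hom_eq fun a => ?_
      simp only [MonoidHom.comp_apply, hφ, FreeMonoid.lift_eval_of]
      exact hΨ a
    refine MonoidHom.ext fun x => ?_
    obtain ⟨w, rfl⟩ := Con.mk'_surjective x
    have h1 : Ψ ((conGen (HKRel Θ)).mk' w) = φ w := by
      rw [← hcomp]; rfl
    rw [h1, Con.lift_mk']
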